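/- arXiv:2308.11168 — 2 statements merged into one kernel-verified Lean document; each statement's English description precedes it below -/
import Mathlib

section
/- Let {X_i, i ∈ J} be nonnegative integer-valued random variables over a finite index set J, and suppose for each i ∈ J there is a set A_i ⊆ J with i ∈ A_i such that X_i is independent of {X_j : j ∉ A_i}. Let W = Σ_{i∈J} X_i with E[W²] < ∞. Then G₁ := Σ_{i∈J} [ E[X_i] · E[Σ_{j∈A_i} X_j] − E[X_i (Σ_{j∈A_i} X_j − 1)] ] equals E[W] − Var(W) = −Γ₂(W). -/
open MeasureTheory ProbabilityTheory

/-- Under local dependence (LD1) (`X i` independent of `{X j : j ∉ A i}`),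
`G₁ := Σ_i (E[X_i]·E[Σ_{j∈A_i} X_j] − E[X_i(Σ_{j∈A_i} X_j − 1)])`
equals `E[W] − Var(W) = −Γ₂(W)` for `W = Σ_i X_i`. -/
theorem stmt_5 {Ω : Type*} [MeasurableSpace Ω] (μ : Measure Ω) [IsProbabilityMeasure μ]
    {J : Type*} [Fintype J] [DecidableEq J]
    (X : J → Ω → ℕ) (hXm : ∀ i, Measurable (X i))
    (hX2 : ∀ i, MemLp (fun ω => (X i ω : ℝ)) 2 μ)
    (A : J → Finset J) (hA : ∀ i, i ∈ A i)
    (hLD1 : ∀ i, IndepFun (X i) (fun ω => fun j : {j : J // j ∉ A i} => X j.1 ω) μ) :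
    ∑ i : J, ((∫ ω, (X i ω : ℝ) ∂μ) * (∫ ω, ∑ j ∈ A i, (X j ω : ℝ) ∂μ)
        - ∫ ω, (X i ω : ℝ) * ((∑ j ∈ A i, (X j ω : ℝ)) - 1) ∂μ)
      = (∫ ω, ∑ i : J, (X i ω : ℝ) ∂μ) - variance (fun ω => ∑ i : J, (X i ω : ℝ)) μ := by
  classical
  set f : J → Ω → ℝ := fun i ω => (X i ω : ℝ) with hf
  have hfm : ∀ i, Measurable (f i) := fun i => measurable_from_nat.comp (hXm i)
  set S : J → Ω → ℝ := fun i ω => ∑ j ∈ A i, f j ω with hSdef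
  set T : J → Ω → ℝ := fun i ω => ∑ j ∈ (A i)ᶜ, f j ω with hTdef
  set W : Ω → ℝ := fun ω => ∑ i : J, f i ω with hWdef
  have hS2 : ∀ i, MemLp (S i) 2 μ := fun i => memLp_finset_sum _ (fun j _ => hX2 j)
  have hT2 : ∀ i, MemLp (T i) 2 μ := fun i => memLp_finset_sum _ (fun j _ => hX2 j)
  have hW2 : MemLp W 2 μ := memLp_finset_sum _ (fun i _ => hX2 i)
  have hint : ∀ i, Integrable (f i) μ := fun i => (hX2 i).integrable one_le_two
  have hSint : ∀ i, Integrable (S i) μ := fun i => integrable_finset_sum _ (fun j _ => hint j)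
  have hTint : ∀ i, Integrable (T i) μ := fun i => integrable_finset_sum _ (fun j _ => hint j)
  have hfS : ∀ i, Integrable (fun ω => f i ω * S i ω) μ := fun i =>
    (((hS2 i).smul (hX2 i) : MemLp ((fun ω => (X i ω : ℝ)) • S i) 1 μ).integrable le_rfl).congr (by filter_upwards with ω; simp [Pi.smul_apply, smul_eq_mul]; exact Or.inl rfl)
  have hfT : ∀ i, Integrable (fun ω => f i ω * T i ω) μ := fun i =>
    (((hT2 i).smul (hX2 i) : MemLp ((fun ω => (X i ω : ℝ)) • T i) 1 μ).integrable le_rfl).congr (by filter_upwards with ω; simp [Pi.smul_apply, smul_eq_mul]; exact Or.inl rfl)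
  have hfW : ∀ i, Integrable (fun ω => f i ω * W ω) μ := fun i =>
    ((hW2.smul (hX2 i) : MemLp ((fun ω => (X i ω : ℝ)) • W) 1 μ).integrable le_rfl).congr (by filter_upwards with ω; simp [Pi.smul_apply, smul_eq_mul]; exact Or.inl rfl)
  -- W = S i + T i pointwise
  have hST : ∀ i ω, S i ω + T i ω = W ω := fun i ω =>
    Finset.sum_add_sum_compl (A i) (fun j => f j ω)
  -- independence of f i and T i
  have hindep : ∀ i, IndepFun (f i) (T i) μ := by
    intro i
    have h := (hLD1 i).comp (_mγ := Real.measurableSpace) (φ := fun n : ℕ => (n : ℝ))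
      (ψ := fun v : {j : J // j ∉ A i} → ℕ => ∑ j : {j : J // j ∉ A i}, (v j : ℝ))
      measurable_from_nat (Finset.measurable_sum Finset.univ (fun j _ => measurable_from_nat.comp (measurable_pi_apply j)))
    convert h using 1
    · rfl
    funext ω
    simp only [hTdef, hf]
    exact Finset.sum_subtype _ (fun j => Finset.mem_compl (s := A i) (a := j)) (fun j => (X j ω : ℝ))
  have hTmul : ∀ i, ∫ ω, f i ω * T i ω ∂μ = (∫ ω, f i ω ∂μ) * ∫ ω, T i ω ∂μ := by
    intro i
    have := (hindep i).integral_mul_eq_mul_integral (hfm i).aestronglyMeasurable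
      (Finset.measurable_sum _ (fun j _ => hfm j)).aestronglyMeasurable
    simpa [Pi.mul_apply] using this
  -- variance identity
  have hvar : variance W μ = ∑ i : J, ((∫ ω, f i ω * S i ω ∂μ)
      - (∫ ω, f i ω ∂μ) * ∫ ω, S i ω ∂μ) := by
    rw [variance_eq_sub hW2]
    have hWsq : ∫ ω, W ω ^ 2 ∂μ = ∑ i : J, ∫ ω, f i ω * W ω ∂μ := by
      rw [← integral_finset_sum _ (fun i _ => hfW i)]
      congr 1; funext ω
      rw [← Finset.sum_mul]
      ring
    have hWint' : ∫ ω, W ω ∂μ = ∑ i : J, ∫ ω, f i ω ∂μ :=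
      integral_finset_sum _ (fun i _ => hint i)
    have hfWi : ∀ i, ∫ ω, f i ω * W ω ∂μ
        = (∫ ω, f i ω * S i ω ∂μ) + (∫ ω, f i ω ∂μ) * ∫ ω, T i ω ∂μ := by
      intro i
      rw [← hTmul i, ← integral_add (hfS i) (hfT i)]
      congr 1; funext ω
      rw [← hST i ω]; ring
    have hWsplit : ∀ i, ∫ ω, W ω ∂μ = (∫ ω, S i ω ∂μ) + ∫ ω, T i ω ∂μ := by
      intro i
      rw [← integral_add (hSint i) (hTint i)]
      congr 1; funext ω; exact (hST i ω).symm
    have hsq : (W ^ 2 : Ω → ℝ) = fun ω => W ω ^ 2 := by funext ω; simp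
    rw [hsq, hWsq, sq, hWint', Finset.sum_mul]
    rw [← Finset.sum_sub_distrib]
    apply Finset.sum_congr rfl
    intro i _
    rw [hfWi i, ← hWint', hWsplit i]
    ring
  -- now the main computation
  have hLHSi : ∀ i, ∫ ω, f i ω * (S i ω - 1) ∂μ = (∫ ω, f i ω * S i ω ∂μ) - ∫ ω, f i ω ∂μ := by
    intro i
    rw [← integral_sub (hfS i) (hint i)]
    congr 1; funext ω; ring
  have hWint' : ∫ ω, W ω ∂μ = ∑ i : J, ∫ ω, f i ω ∂μ :=
    integral_finset_sum _ (fun i _ => hint i)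
  calc ∑ i : J, ((∫ ω, f i ω ∂μ) * (∫ ω, S i ω ∂μ) - ∫ ω, f i ω * (S i ω - 1) ∂μ)
      = ∑ i : J, ((∫ ω, f i ω ∂μ)
          - ((∫ ω, f i ω * S i ω ∂μ) - (∫ ω, f i ω ∂μ) * ∫ ω, S i ω ∂μ)) := by
        apply Finset.sum_congr rfl
        intro i _
        rw [hLHSi i]; ring
    _ = (∫ ω, W ω ∂μ) - variance W μ := by
        rw [Finset.sum_sub_distrib, hWint', hvar]
end

section
/- Let {X_i, i∈J} satisfy local dependence (LD1) with W = Σ_{i∈J} X_i and E[W³] < ∞. Then Σ_{i∈J} Σ_{j∈A_i} (E[X_i] E[X_j W] − E[X_i X_j W]) + Σ_{i∈J} Σ_{j,k∈A_i} (½ E[X_i X_j X_k] − ½ E[X_i] E[X_j X_k]) = −½ E[W³] + ½ E[W] E[W²]. -/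
open MeasureTheory ProbabilityTheory

open scoped ENNReal

section Helpers

variable {Ω : Type*} [MeasurableSpace Ω] {μ : Measure Ω} [IsProbabilityMeasure μ]

private lemma aux_memL32 {f g : Ω → ℝ} (hf : MemLp f 3 μ) (hg : MemLp g 3 μ) :
    MemLp (fun ω => f ω * g ω) (3/2) μ := by
  have h := hg.smul (φ := f) hf (r := 3/2)
    (hpqr := ⟨by rw [ENNReal.inv_div (by norm_num) (by norm_num), ← two_mul, div_eq_mul_inv]⟩)
  exact h

private lemma aux_int3 {f g h : Ω → ℝ} (hf : MemLp f 3 μ) (hg : MemLp g 3 μ)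
    (hh : MemLp h 3 μ) : Integrable (fun ω => f ω * g ω * h ω) μ := by
  have h2 := hh.smul (φ := fun ω => f ω * g ω) (aux_memL32 hf hg) (r := 1)
    (hpqr := ⟨by rw [ENNReal.inv_div (by norm_num) (by norm_num), inv_one, ← one_div,
          ENNReal.div_add_div_same,
          (show (2:ℝ≥0∞)+1 = 3 by norm_num), ENNReal.div_self (by norm_num) (by norm_num)]⟩)
  refine memLp_one_iff_integrable.mp ?_
  exact h2

private lemma aux_int2 {f g : Ω → ℝ} (hf : MemLp f 3 μ) (hg : MemLp g 3 μ) :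
    Integrable (fun ω => f ω * g ω) μ :=
  memLp_one_iff_integrable.mp ((aux_memL32 hf hg).mono_exponent
    (by rw [ENNReal.le_div_iff_mul_le (by norm_num) (by norm_num)]; norm_num))

private lemma aux_int1 {f : Ω → ℝ} (hf : MemLp f 3 μ) : Integrable f μ :=
  memLp_one_iff_integrable.mp (hf.mono_exponent (by norm_num))

private lemma aux_key {f u v w : Ω → ℝ} (hf : MemLp f 3 μ) (hu : MemLp u 3 μ)
    (hv : MemLp v 3 μ) (hw : w = fun ω => u ω + v ω)
    (hind : ∫ ω, f ω * (v ω * v ω) ∂μ = (∫ ω, f ω ∂μ) * ∫ ω, v ω * v ω ∂μ) :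
    (∫ ω, f ω ∂μ) * (∫ ω, u ω * w ω ∂μ) - (∫ ω, f ω * u ω * w ω ∂μ)
      + ((1/2) * (∫ ω, f ω * u ω * u ω ∂μ)
        - (1/2) * (∫ ω, f ω ∂μ) * ∫ ω, u ω * u ω ∂μ)
      = -(1/2) * (∫ ω, f ω * w ω * w ω ∂μ)
        + (1/2) * (∫ ω, f ω ∂μ) * ∫ ω, w ω * w ω ∂μ := by
  subst hw
  have Iuu : Integrable (fun ω => u ω * u ω) μ := aux_int2 hu hu
  have Iuv : Integrable (fun ω => u ω * v ω) μ := aux_int2 hu hv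
  have Ivv : Integrable (fun ω => v ω * v ω) μ := aux_int2 hv hv
  have Ifuu : Integrable (fun ω => f ω * u ω * u ω) μ := aux_int3 hf hu hu
  have Ifuv : Integrable (fun ω => f ω * u ω * v ω) μ := aux_int3 hf hu hv
  have Ifvv : Integrable (fun ω => f ω * (v ω * v ω)) μ := by
    simpa [mul_assoc] using aux_int3 hf hv hv
  have E1 : ∫ ω, u ω * (fun ω => u ω + v ω) ω ∂μ
      = (∫ ω, u ω * u ω ∂μ) + ∫ ω, u ω * v ω ∂μ := by
    rw [show (fun ω => u ω * (fun ω => u ω + v ω) ω)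
        = fun ω => u ω * u ω + u ω * v ω from funext fun ω => by simp; ring]
    exact integral_add Iuu Iuv
  have E2 : ∫ ω, f ω * u ω * (fun ω => u ω + v ω) ω ∂μ
      = (∫ ω, f ω * u ω * u ω ∂μ) + ∫ ω, f ω * u ω * v ω ∂μ := by
    rw [show (fun ω => f ω * u ω * (fun ω => u ω + v ω) ω)
        = fun ω => f ω * u ω * u ω + f ω * u ω * v ω from funext fun ω => by simp; ring]
    exact integral_add Ifuu Ifuv
  have E3 : ∫ ω, f ω * (fun ω => u ω + v ω) ω * (fun ω => u ω + v ω) ω ∂μ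
      = (∫ ω, f ω * u ω * u ω ∂μ) + 2 * (∫ ω, f ω * u ω * v ω ∂μ)
        + ∫ ω, f ω * (v ω * v ω) ∂μ := by
    rw [show (fun ω => f ω * (fun ω => u ω + v ω) ω * (fun ω => u ω + v ω) ω)
        = fun ω => (f ω * u ω * u ω + 2 * (f ω * u ω * v ω)) + f ω * (v ω * v ω)
        from funext fun ω => by simp; ring]
    have I12 : Integrable (fun ω => f ω * u ω * u ω + 2 * (f ω * u ω * v ω)) μ :=
      Ifuu.add (Ifuv.const_mul 2)
    rw [integral_add I12 Ifvv, integral_add Ifuu (Ifuv.const_mul 2), integral_const_mul]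
  have E4 : ∫ ω, (fun ω => u ω + v ω) ω * (fun ω => u ω + v ω) ω ∂μ
      = (∫ ω, u ω * u ω ∂μ) + 2 * (∫ ω, u ω * v ω ∂μ) + ∫ ω, v ω * v ω ∂μ := by
    rw [show (fun ω => (fun ω => u ω + v ω) ω * (fun ω => u ω + v ω) ω)
        = fun ω => (u ω * u ω + 2 * (u ω * v ω)) + v ω * v ω
        from funext fun ω => by simp; ring]
    have I12 : Integrable (fun ω => u ω * u ω + 2 * (u ω * v ω)) μ :=
      Iuu.add (Iuv.const_mul 2)
    rw [integral_add I12 Ivv, integral_add Iuu (Iuv.const_mul 2), integral_const_mul]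
  rw [E1, E2, E3, E4]
  linear_combination (1/2) * hind

end Helpers

/-- Under local dependence (LD1), with `W = Σ_i X_i` having finite third moment,
`Σ_i Σ_{j∈A_i} (E[X_i]E[X_j W] − E[X_i X_j W])
 + Σ_i Σ_{j,k∈A_i} (½E[X_i X_j X_k] − ½E[X_i]E[X_j X_k])
 = −½E[W³] + ½E[W]E[W²]`. -/
theorem stmt_7 {Ω : Type*} [MeasurableSpace Ω] (μ : Measure Ω) [IsProbabilityMeasure μ]
    {J : Type*} [Fintype J] [DecidableEq J]
    (X : J → Ω → ℕ) (hXm : ∀ i, Measurable (X i))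
    (hX3 : ∀ i, MemLp (fun ω => (X i ω : ℝ)) 3 μ)
    (A : J → Finset J) (hA : ∀ i, i ∈ A i)
    (hLD1 : ∀ i, IndepFun (X i) (fun ω => fun j : {j : J // j ∉ A i} => X j.1 ω) μ)
    (W : Ω → ℝ) (hW : W = fun ω => ∑ i : J, (X i ω : ℝ)) :
    ∑ i : J, ∑ j ∈ A i,
        ((∫ ω, (X i ω : ℝ) ∂μ) * (∫ ω, (X j ω : ℝ) * W ω ∂μ)
          - ∫ ω, (X i ω : ℝ) * (X j ω : ℝ) * W ω ∂μ)
      + ∑ i : J, ∑ j ∈ A i, ∑ k ∈ A i,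
        ((1 / 2) * (∫ ω, (X i ω : ℝ) * (X j ω : ℝ) * (X k ω : ℝ) ∂μ)
          - (1 / 2) * (∫ ω, (X i ω : ℝ) ∂μ) * ∫ ω, (X j ω : ℝ) * (X k ω : ℝ) ∂μ)
      = -(1 / 2) * (∫ ω, W ω ^ 3 ∂μ) + (1 / 2) * (∫ ω, W ω ∂μ) * ∫ ω, W ω ^ 2 ∂μ := by
  classical
  have hWm : MemLp W 3 μ := by
    rw [hW]; exact memLp_finset_sum Finset.univ (fun i _ => hX3 i)
  set U : J → Ω → ℝ := fun i ω => ∑ j ∈ A i, (X j ω : ℝ) with hU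
  set V : J → Ω → ℝ := fun i ω => ∑ j ∈ (A i)ᶜ, (X j ω : ℝ) with hV
  have hUm : ∀ i, MemLp (U i) 3 μ := fun i => memLp_finset_sum _ (fun j _ => hX3 j)
  have hVm : ∀ i, MemLp (V i) 3 μ := fun i => memLp_finset_sum _ (fun j _ => hX3 j)
  have hWUV : ∀ i, W = fun ω => U i ω + V i ω := by
    intro i; funext ω; rw [hW]
    exact (Finset.sum_add_sum_compl (A i) _).symm
  -- independence
  have hind : ∀ i, ∫ ω, (X i ω : ℝ) * (V i ω * V i ω) ∂μ
      = (∫ ω, (X i ω : ℝ) ∂μ) * ∫ ω, V i ω * V i ω ∂μ := by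
    intro i
    set g : ({j : J // j ∉ A i} → ℕ) → ℝ :=
      fun v => (∑ j, (v j : ℝ)) * (∑ j, (v j : ℝ)) with hg
    have hgm : Measurable g := by
      apply Measurable.mul <;>
        exact Finset.measurable_sum _
          (fun j _ => measurable_from_nat.comp (measurable_pi_apply j))
    have hI : IndepFun ((Nat.cast : ℕ → ℝ) ∘ X i)
        (g ∘ (fun ω => fun j : {j : J // j ∉ A i} => X j.1 ω)) μ :=
      (hLD1 i).comp measurable_from_nat hgm
    have hVq : ∀ ω, V i ω = ∑ j : {j : J // j ∉ A i}, (X j.1 ω : ℝ) := fun ω =>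
      Finset.sum_subtype _ (fun x => Finset.mem_compl) _
    have key := hI.integral_mul_eq_mul_integral ((hX3 i).1)
      ((hgm.comp (measurable_pi_lambda _ (fun j => hXm j.1))).aestronglyMeasurable)
    have h1 : (fun ω => (X i ω : ℝ) * (V i ω * V i ω))
        = ((Nat.cast : ℕ → ℝ) ∘ X i) * (g ∘ (fun ω => fun j : {j : J // j ∉ A i} => X j.1 ω)) :=
      funext fun ω => by
        simp only [Pi.mul_apply, Function.comp_apply, hg, hVq ω]
    have h2 : (fun ω => V i ω * V i ω)
        = g ∘ (fun ω => fun j : {j : J // j ∉ A i} => X j.1 ω) :=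
      funext fun ω => by
        simp only [Function.comp_apply, hg, hVq ω]
    rw [h1, h2]
    exact key
  have step1 : ∀ i, ∑ j ∈ A i,
      ((∫ ω, (X i ω : ℝ) ∂μ) * (∫ ω, (X j ω : ℝ) * W ω ∂μ)
        - ∫ ω, (X i ω : ℝ) * (X j ω : ℝ) * W ω ∂μ)
      = (∫ ω, (X i ω : ℝ) ∂μ) * (∫ ω, U i ω * W ω ∂μ)
        - ∫ ω, (X i ω : ℝ) * U i ω * W ω ∂μ := by
    intro i
    have a1 : ∫ ω, U i ω * W ω ∂μ = ∑ j ∈ A i, ∫ ω, (X j ω : ℝ) * W ω ∂μ := by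
      rw [← integral_finset_sum _ (fun j _ => aux_int2 (hX3 j) hWm)]
      congr 1; funext ω; simp [hU, Finset.sum_mul]
    have a2 : ∫ ω, (X i ω : ℝ) * U i ω * W ω ∂μ
        = ∑ j ∈ A i, ∫ ω, (X i ω : ℝ) * (X j ω : ℝ) * W ω ∂μ := by
      rw [← integral_finset_sum _ (fun j _ => aux_int3 (hX3 i) (hX3 j) hWm)]
      congr 1; funext ω; simp [hU, Finset.mul_sum, Finset.sum_mul]
    rw [a1, a2, Finset.mul_sum, ← Finset.sum_sub_distrib]
  have step2 : ∀ i, ∑ j ∈ A i, ∑ k ∈ A i,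
      ((1 / 2) * (∫ ω, (X i ω : ℝ) * (X j ω : ℝ) * (X k ω : ℝ) ∂μ)
        - (1 / 2) * (∫ ω, (X i ω : ℝ) ∂μ) * ∫ ω, (X j ω : ℝ) * (X k ω : ℝ) ∂μ)
      = (1 / 2) * (∫ ω, (X i ω : ℝ) * U i ω * U i ω ∂μ)
        - (1 / 2) * (∫ ω, (X i ω : ℝ) ∂μ) * ∫ ω, U i ω * U i ω ∂μ := by
    intro i
    have b1 : ∫ ω, (X i ω : ℝ) * U i ω * U i ω ∂μ
        = ∑ j ∈ A i, ∑ k ∈ A i, ∫ ω, (X i ω : ℝ) * (X j ω : ℝ) * (X k ω : ℝ) ∂μ := by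
      have inner : ∀ j, ∫ ω, (X i ω : ℝ) * (X j ω : ℝ) * U i ω ∂μ
          = ∑ k ∈ A i, ∫ ω, (X i ω : ℝ) * (X j ω : ℝ) * (X k ω : ℝ) ∂μ := by
        intro j
        rw [← integral_finset_sum _ (fun k _ => aux_int3 (hX3 i) (hX3 j) (hX3 k))]
        congr 1; funext ω; simp [hU, Finset.mul_sum]
      calc ∫ ω, (X i ω : ℝ) * U i ω * U i ω ∂μ
          = ∑ j ∈ A i, ∫ ω, (X i ω : ℝ) * (X j ω : ℝ) * U i ω ∂μ := by
            rw [← integral_finset_sum _ (fun j _ => aux_int3 (hX3 i) (hX3 j) (hUm i))]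
            congr 1; funext ω
            simp only [hU, Finset.mul_sum, Finset.sum_mul]
            rw [Finset.sum_comm]
        _ = ∑ j ∈ A i, ∑ k ∈ A i, ∫ ω, (X i ω : ℝ) * (X j ω : ℝ) * (X k ω : ℝ) ∂μ :=
            Finset.sum_congr rfl fun j _ => inner j
    have b2 : ∫ ω, U i ω * U i ω ∂μ
        = ∑ j ∈ A i, ∑ k ∈ A i, ∫ ω, (X j ω : ℝ) * (X k ω : ℝ) ∂μ := by
      have inner : ∀ j, ∫ ω, (X j ω : ℝ) * U i ω ∂μ
          = ∑ k ∈ A i, ∫ ω, (X j ω : ℝ) * (X k ω : ℝ) ∂μ := by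
        intro j
        rw [← integral_finset_sum _ (fun k _ => aux_int2 (hX3 j) (hX3 k))]
        congr 1; funext ω; simp [hU, Finset.mul_sum]
      calc ∫ ω, U i ω * U i ω ∂μ
          = ∑ j ∈ A i, ∫ ω, (X j ω : ℝ) * U i ω ∂μ := by
            rw [← integral_finset_sum _ (fun j _ => aux_int2 (hX3 j) (hUm i))]
            congr 1; funext ω
            simp only [hU, Finset.mul_sum, Finset.sum_mul]
            rw [Finset.sum_comm]
        _ = ∑ j ∈ A i, ∑ k ∈ A i, ∫ ω, (X j ω : ℝ) * (X k ω : ℝ) ∂μ :=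
            Finset.sum_congr rfl fun j _ => inner j
    rw [b1, b2]
    simp only [Finset.mul_sum, ← Finset.sum_sub_distrib]
  -- RHS decompositions
  have r1 : ∫ ω, W ω ∂μ = ∑ i, ∫ ω, (X i ω : ℝ) ∂μ := by
    simp only [hW]
    exact integral_finset_sum _ (fun i _ => aux_int1 (hX3 i))
  have r2 : ∫ ω, W ω ^ 2 ∂μ = ∫ ω, W ω * W ω ∂μ := by
    congr 1; funext ω; ring
  have r3 : ∫ ω, W ω ^ 3 ∂μ = ∑ i, ∫ ω, (X i ω : ℝ) * W ω * W ω ∂μ := by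
    rw [← integral_finset_sum _ (fun i _ => aux_int3 (hX3 i) hWm hWm)]
    congr 1; funext ω
    have hWω : W ω = ∑ i, (X i ω : ℝ) := by rw [hW]
    calc W ω ^ 3 = (∑ i, (X i ω : ℝ)) * W ω * W ω := by rw [← hWω]; ring
      _ = ∑ i, (X i ω : ℝ) * W ω * W ω := by rw [Finset.sum_mul, Finset.sum_mul]
  rw [r1, r2, r3, ← Finset.sum_add_distrib]
  have per : ∀ i ∈ Finset.univ, (∑ j ∈ A i,
        ((∫ ω, (X i ω : ℝ) ∂μ) * (∫ ω, (X j ω : ℝ) * W ω ∂μ)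
          - ∫ ω, (X i ω : ℝ) * (X j ω : ℝ) * W ω ∂μ)
      + ∑ j ∈ A i, ∑ k ∈ A i,
        ((1 / 2) * (∫ ω, (X i ω : ℝ) * (X j ω : ℝ) * (X k ω : ℝ) ∂μ)
          - (1 / 2) * (∫ ω, (X i ω : ℝ) ∂μ) * ∫ ω, (X j ω : ℝ) * (X k ω : ℝ) ∂μ))
      = -(1 / 2) * (∫ ω, (X i ω : ℝ) * W ω * W ω ∂μ)
        + (1 / 2) * (∫ ω, (X i ω : ℝ) ∂μ) * ∫ ω, W ω * W ω ∂μ := by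
    intro i _
    rw [step1 i, step2 i]
    exact aux_key (hX3 i) (hUm i) (hVm i) (hWUV i) (hind i)
  rw [Finset.sum_congr rfl per, Finset.sum_add_distrib, ← Finset.mul_sum,
    ← Finset.sum_mul, ← Finset.mul_sum]
end
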